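/- If n ≥ 3, then no two vertices of the blow-up ⊗^n G of a graph G are strongly cospectral. -/

import Mathlib

/-- The blow-up of `n` copies of `G`. -/
def SimpleGraph.blowup {V : Type*} (n : ℕ) (G : SimpleGraph V) : SimpleGraph (ZMod n × V) :=
  G.comap Prod.snd

instance {V : Type*} {n : ℕ} (G : SimpleGraph V) [h : DecidableRel G.Adj] :
    DecidableRel (G.blowup n).Adj := fun x y => h x.2 y.2

/-- Vertices `x` and `y` are strongly cospectral for the symmetric matrix `B`. -/
def StronglyCospectral {W : Type*} [Fintype W] (B : Matrix W W ℝ) (x y : W) : Prop :=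
  ∀ μ : ℝ, ∃ ε : ℝ, (ε = 1 ∨ ε = -1) ∧ ∀ v : W → ℝ, B.mulVec v = μ • v → v x = ε * v y

/-- If `n ≥ 3`, then no two (distinct) vertices of the blow-up `⊗ⁿ G` are strongly
cospectral. -/
theorem blowup_no_strong_cospectrality_of_three_le {V : Type*} [Fintype V] [DecidableEq V]
    (n : ℕ) [NeZero n] (hn : 3 ≤ n) (G : SimpleGraph V) [DecidableRel G.Adj] (hG : G.Connected)
    (x y : ZMod n × V) (hxy : x ≠ y) :
    ¬ StronglyCospectral ((G.blowup n).adjMatrix ℝ) x y := by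
  intro hsc
  obtain ⟨k, hk1, hk2⟩ : ∃ k : ZMod n, k ≠ x.1 ∧ k ≠ y.1 := by
    by_contra h
    push_neg at h
    have hsub : (Finset.univ : Finset (ZMod n)) ⊆ {x.1, y.1} := by
      intro k _
      rcases eq_or_ne k x.1 with h' | h'
      · simp [h']
      · simp [h k h']
    have hle := Finset.card_le_card hsub
    have h2 : ({x.1, y.1} : Finset (ZMod n)).card ≤ 2 :=
      (Finset.card_insert_le _ _).trans (by simp)
    rw [Finset.card_univ, ZMod.card] at hle
    omega
  have hxk : x ≠ (k, x.2) := fun h => hk1 (congrArg Prod.fst h).symm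
  have hyk : y ≠ (k, x.2) := fun h => hk2 (congrArg Prod.fst h).symm
  set v : ZMod n × V → ℝ :=
    Pi.single x (1:ℝ) - Pi.single (k, x.2) (1:ℝ) with hvdef
  have hentry : ∀ z : ZMod n × V,
      (G.blowup n).adjMatrix ℝ z x = (G.blowup n).adjMatrix ℝ z (k, x.2) := by
    intro z
    rfl
  have heig : ((G.blowup n).adjMatrix ℝ).mulVec v = (0:ℝ) • v := by
    rw [hvdef, Matrix.mulVec_sub, zero_smul]
    funext z
    simp only [Pi.sub_apply, Matrix.mulVec_single, Pi.smul_apply, Matrix.col_apply, op_smul_eq_mul, mul_one, Pi.zero_apply]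
    rw [hentry z, sub_self]
  obtain ⟨ε, hε, hv⟩ := hsc 0
  have := hv v heig
  rw [hvdef] at this
  simp [Pi.single_apply, hxk, (Ne.symm hxy), hyk] at this
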